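/- For every finitely supported complex sequence (u_n)_{n≥0} with u_0 = 0, the following identity holds: ∑_{n=1}^∞ w_n |u_n|² + ∑_{n=2}^∞ |((n−1)/n)^{1/4} u_n − (n/(n−1))^{1/4} u_{n−1}|² = ∑_{n=1}^∞ |u_n − u_{n−1}|², where w_n := 2 − √((n+1)/n) − √((n−1)/n). -/

import Mathlib

open Complex Finset

/-- The identity behind the improved discrete Hardy inequality: for every finitely supported
complex sequence `u` with `u 0 = 0`,
`∑_{n≥1} w n |u n|² + ∑_{n≥2} |((n-1)/n)^{1/4} u n - (n/(n-1))^{1/4} u (n-1)|²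
  = ∑_{n≥1} |u n - u (n-1)|²`
where `w n = 2 - √((n+1)/n) - √((n-1)/n)`. -/
theorem improved_discrete_hardy_identity (u : ℕ → ℂ) (h0 : u 0 = 0)
    (hsupp : (Function.support u).Finite) :
    (∑' n : ℕ, (2 - Real.sqrt (((n : ℝ) + 2) / ((n : ℝ) + 1))
        - Real.sqrt ((n : ℝ) / ((n : ℝ) + 1))) * ‖(u (n + 1))‖ ^ 2)
    + (∑' n : ℕ, ‖
        (((((n : ℝ) + 1) / ((n : ℝ) + 2)) ^ ((1 : ℝ) / 4) : ℝ) * u (n + 2)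
          - ((((n : ℝ) + 2) / ((n : ℝ) + 1)) ^ ((1 : ℝ) / 4) : ℝ) * u (n + 1))‖ ^ 2)
    = ∑' n : ℕ, ‖(u (n + 1) - u n)‖ ^ 2 := by
  obtain ⟨N, hN⟩ : ∃ N, ∀ n, N ≤ n → u n = 0 := by
    obtain ⟨N, hNb⟩ := hsupp.bddAbove
    refine ⟨N + 1, fun n hn => ?_⟩
    by_contra h
    exact absurd (hNb (Function.mem_support.2 h)) (by omega)
  set f : ℕ → ℝ := fun n => (2 - Real.sqrt (((n : ℝ) + 2) / ((n : ℝ) + 1))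
        - Real.sqrt ((n : ℝ) / ((n : ℝ) + 1))) * ‖(u (n + 1))‖ ^ 2 with hf
  set g : ℕ → ℝ := fun n => ‖
        (((((n : ℝ) + 1) / ((n : ℝ) + 2)) ^ ((1 : ℝ) / 4) : ℝ) * u (n + 2)
          - ((((n : ℝ) + 2) / ((n : ℝ) + 1)) ^ ((1 : ℝ) / 4) : ℝ) * u (n + 1))‖ ^ 2 with hg
  set h : ℕ → ℝ := fun n => ‖(u (n + 1) - u n)‖ ^ 2 with hh
  set φ : ℕ → ℝ := fun n => Complex.normSq (u n)
      + Real.sqrt ((n : ℝ) / ((n : ℝ) + 1)) * Complex.normSq (u (n + 1))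
      - 2 * (u (n + 1) * (starRingEnd ℂ) (u n)).re with hφ
  have key : ∀ n : ℕ, f n + g n = h n + (φ (n + 1) - φ n) := by
    intro n
    have hx : (0 : ℝ) ≤ ((n : ℝ) + 1) / ((n : ℝ) + 2) := by positivity
    have hy : (0 : ℝ) ≤ ((n : ℝ) + 2) / ((n : ℝ) + 1) := by positivity
    set α := ((((n : ℝ) + 1) / ((n : ℝ) + 2)) ^ ((1 : ℝ) / 4) : ℝ) with hα
    set β := ((((n : ℝ) + 2) / ((n : ℝ) + 1)) ^ ((1 : ℝ) / 4) : ℝ) with hβ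
    have hα2 : α ^ 2 = Real.sqrt (((n : ℝ) + 1) / ((n : ℝ) + 2)) := by
      rw [hα, ← Real.rpow_natCast _ 2, ← Real.rpow_mul hx, Real.sqrt_eq_rpow]
      norm_num
    have hβ2 : β ^ 2 = Real.sqrt (((n : ℝ) + 2) / ((n : ℝ) + 1)) := by
      rw [hβ, ← Real.rpow_natCast _ 2, ← Real.rpow_mul hy, Real.sqrt_eq_rpow]
      norm_num
    have hαβ : (α : ℂ) * (β : ℂ) = 1 := by
      rw [← Complex.ofReal_mul, hα, hβ, ← Real.mul_rpow hx hy]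
      have h1 : (((n : ℝ) + 1) / ((n : ℝ) + 2)) * (((n : ℝ) + 2) / ((n : ℝ) + 1)) = 1 := by
        field_simp
      rw [h1, Real.one_rpow, Complex.ofReal_one]
    have hcross : ((α : ℂ) * u (n + 2)) * (starRingEnd ℂ) ((β : ℂ) * u (n + 1))
        = u (n + 2) * (starRingEnd ℂ) (u (n + 1)) := by
      rw [map_mul, Complex.conj_ofReal]
      calc (α : ℂ) * u (n + 2) * ((β : ℂ) * (starRingEnd ℂ) (u (n + 1)))
          = ((α : ℂ) * (β : ℂ)) * (u (n + 2) * (starRingEnd ℂ) (u (n + 1))) := by ring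
        _ = u (n + 2) * (starRingEnd ℂ) (u (n + 1)) := by rw [hαβ, one_mul]
    have hgn : g n = α ^ 2 * Complex.normSq (u (n + 2)) + β ^ 2 * Complex.normSq (u (n + 1))
        - 2 * (u (n + 2) * (starRingEnd ℂ) (u (n + 1))).re := by
      rw [hg]
      simp only
      rw [Complex.sq_norm, Complex.normSq_sub, Complex.normSq_mul, Complex.normSq_mul,
        Complex.normSq_ofReal, Complex.normSq_ofReal, hcross]
      ring
    have hhn : h n = Complex.normSq (u (n + 1)) + Complex.normSq (u n)
        - 2 * (u (n + 1) * (starRingEnd ℂ) (u n)).re := by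
      rw [hh]
      simp only
      rw [Complex.sq_norm, Complex.normSq_sub]
    rw [hgn, hhn, hf, hφ]
    simp only
    rw [Complex.sq_norm]
    push_cast
    have e1 : ((n : ℝ) + 1 + 1) = (n : ℝ) + 2 := by ring
    have e2 : n + 1 + 1 = n + 2 := rfl
    rw [e1, e2, ← hα2, ← hβ2]
    ring
  have hsum : ∀ (F : ℕ → ℝ), (∀ n, N + 1 ≤ n → F n = 0) →
      ∑' n, F n = ∑ n ∈ Finset.range (N + 1), F n := by
    intro F hF
    exact tsum_eq_sum (fun n hn => hF n (by simpa using hn))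
  have hvu : ∀ m, N ≤ m → ‖(u m)‖ = 0 := fun m hm => by
    rw [hN m hm]; simp
  rw [hsum f (fun n hn => by rw [hf]; simp only; rw [hvu (n+1) (by omega)]; ring),
      hsum g (fun n hn => by
        rw [hg]; simp only
        rw [hN (n+2) (by omega), hN (n+1) (by omega)]; simp),
      hsum h (fun n hn => by
        rw [hh]; simp only
        rw [hN (n+1) (by omega), hN n (by omega)]; simp)]
  rw [← Finset.sum_add_distrib]
  have : ∀ n ∈ Finset.range (N + 1), f n + g n = h n + (φ (n + 1) - φ n) :=
    fun n _ => key n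
  rw [Finset.sum_congr rfl this, Finset.sum_add_distrib, Finset.sum_range_sub]
  have hφ0 : φ 0 = 0 := by
    rw [hφ]; simp [h0]
  have hφN : φ (N + 1) = 0 := by
    rw [hφ]; simp [hN (N + 1) (by omega), hN (N + 2) (by omega)]
  rw [hφ0, hφN]
  ring
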